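/- A univariate polynomial p ∈ ℝ[t] is nonnegative on the interval [0, T] (T > 0) if and only if it can be written as p(t) = σ₀(t) + t(T − t)σ₁(t) if deg p is even, or p(t) = t σ₀(t) + (T − t) σ₁(t) if deg p is odd, where σ₀, σ₁ are sums of squares of polynomials of appropriate degrees. -/

import Mathlib

open Polynomial

lemma sq_isSumSq {R : Type*} [Mul R] [AddMonoid R] (a : R) : IsSumSq (a * a) := by
  simpa using IsSumSq.sq_add a 0 IsSumSq.zero

lemma IsSumSq.mul' {R : Type*} [CommSemiring R] {a b : R} (ha : IsSumSq a) (hb : IsSumSq b) :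
    IsSumSq (a * b) := by
  induction ha with
  | zero => simpa using IsSumSq.zero
  | sq_add x hs ih =>
    rw [add_mul]
    refine IsSumSq.add ?_ ih
    clear hs ih
    induction hb with
    | zero => simpa using IsSumSq.zero
    | @sq_add y t ht ih =>
      have : x * x * (y * y + t) = (x*y) * (x*y) + x * x * t := by ring
      rw [this]
      exact IsSumSq.sq_add _ ih

lemma isSumSq_C_of_nonneg {c : ℝ} (hc : 0 ≤ c) : IsSumSq (C c : ℝ[X]) := by
  have : (C c : ℝ[X]) = C (Real.sqrt c) * C (Real.sqrt c) := by
    rw [← C_mul, Real.mul_self_sqrt hc]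
  rw [this]; exact sq_isSumSq _

lemma degree_C_mul_le' (c : ℝ) (s : ℝ[X]) : (C c * s).degree ≤ s.degree := by
  calc (C c * s).degree ≤ (C c).degree + s.degree := degree_mul_le _ _
  _ ≤ 0 + s.degree := add_le_add_left degree_C_le _
  _ = s.degree := zero_add _

lemma degree_C_mul_mul_le' (c : ℝ) {g : ℝ[X]} (hg : g.degree ≤ 2) (s : ℝ[X]) :
    (C c * (g * s)).degree ≤ s.degree + 2 := by
  refine le_trans (degree_C_mul_le' _ _) ?_
  calc (g * s).degree ≤ g.degree + s.degree := degree_mul_le _ _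
  _ ≤ 2 + s.degree := add_le_add_left hg _
  _ = s.degree + 2 := add_comm _ _

lemma degree_TX_sq (T : ℝ) : ((C T - X : ℝ[X])^2).degree ≤ 2 := by
  refine le_trans (degree_pow_le _ _) ?_
  have h1 : (C T - X : ℝ[X]).degree ≤ 1 := by
    rw [show (C T - X : ℝ[X]) = -(X - C T) by ring, degree_neg, degree_X_sub_C]
  calc (2 : ℕ) • (C T - X : ℝ[X]).degree ≤ (2:ℕ) • (1 : WithBot ℕ) :=
        nsmul_le_nsmul_right h1 2
  _ = 2 := rfl

lemma degree_X_sq : ((X : ℝ[X])^2).degree ≤ 2 := by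
  simpa using degree_pow_le (X : ℝ[X]) 2

def GoodE (T : ℝ) (p : ℝ[X]) : Prop :=
  ∃ σ₀ σ₁ : ℝ[X], IsSumSq σ₀ ∧ IsSumSq σ₁ ∧ σ₀.degree ≤ p.degree ∧
    σ₁.degree + 2 ≤ p.degree ∧ p = σ₀ + X * (C T - X) * σ₁

def GoodO (T : ℝ) (p : ℝ[X]) : Prop :=
  ∃ σ₀ σ₁ : ℝ[X], IsSumSq σ₀ ∧ IsSumSq σ₁ ∧ σ₀.degree + 1 ≤ p.degree ∧
    σ₁.degree + 1 ≤ p.degree ∧ p = X * σ₀ + (C T - X) * σ₁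


lemma isSumSq_C_mul {c : ℝ} (hc : 0 ≤ c) {s : ℝ[X]} (hs : IsSumSq s) : IsSumSq (C c * s) :=
  (isSumSq_C_of_nonneg hc).mul' hs

lemma isSumSq_C_mul_sq_mul {c : ℝ} (hc : 0 ≤ c) (g : ℝ[X]) {s : ℝ[X]} (hs : IsSumSq s) :
    IsSumSq (C c * (g^2 * s)) := by
  rw [pow_two]
  exact isSumSq_C_mul hc ((sq_isSumSq g).mul' hs)

lemma degree_linL (c T : ℝ) : (X + C c * C T : ℝ[X]).degree = 1 := by
  have h : (X + C c * C T : ℝ[X]) = X - C (-(c*T)) := by rw [map_neg, ← C_mul]; ring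
  rw [h, degree_X_sub_C]

lemma degree_linR (d T : ℝ) : (C d * C T + (C T - X) : ℝ[X]).degree = 1 := by
  have h : (C d * C T + (C T - X) : ℝ[X]) = -(X - C (d*T + T)) := by
    rw [map_add, ← C_mul]; ring
  rw [h, degree_neg, degree_X_sub_C]

lemma shiftL_odd {T c : ℝ} (hc : 0 ≤ c) {q : ℝ[X]} (h : GoodE T q) :
    GoodO T ((X + C c * C T) * q) := by
  obtain ⟨σ₀, σ₁, s0, s1, d0, d1, rfl⟩ := h
  set q := σ₀ + X * (C T - X) * σ₁ with hq
  have hdeg : ((X + C c * C T) * q).degree = 1 + q.degree := by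
    rw [degree_mul, degree_linL]
  refine ⟨C (1+c) * σ₀ + C c * ((C T - X)^2 * σ₁),
          C c * σ₀ + C (1+c) * (X^2 * σ₁), ?_, ?_, ?_, ?_, ?_⟩
  · exact (isSumSq_C_mul (by linarith) s0).add (isSumSq_C_mul_sq_mul hc _ s1)
  · exact (isSumSq_C_mul hc s0).add (isSumSq_C_mul_sq_mul (by linarith) _ s1)
  · rw [hdeg]
    have h1 : (C (1+c) * σ₀ + C c * ((C T - X)^2 * σ₁)).degree ≤ q.degree := by
      refine le_trans (degree_add_le _ _) (max_le ?_ ?_)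
      · exact le_trans (degree_C_mul_le' _ _) d0
      · exact le_trans (degree_C_mul_mul_le' _ (degree_TX_sq T) _) d1
    calc _ ≤ q.degree + 1 := add_le_add_left h1 _
    _ = 1 + q.degree := add_comm _ _
  · rw [hdeg]
    have h1 : (C c * σ₀ + C (1+c) * (X^2 * σ₁)).degree ≤ q.degree := by
      refine le_trans (degree_add_le _ _) (max_le ?_ ?_)
      · exact le_trans (degree_C_mul_le' _ _) d0
      · exact le_trans (degree_C_mul_mul_le' _ degree_X_sq _) d1
    calc _ ≤ q.degree + 1 := add_le_add_left h1 _
    _ = 1 + q.degree := add_comm _ _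
  · rw [hq, map_add, C_1]; ring

lemma shiftL_even {T c : ℝ} (hc : 0 ≤ c) {q : ℝ[X]} (h : GoodO T q) :
    GoodE T ((X + C c * C T) * q) := by
  obtain ⟨σ₀, σ₁, s0, s1, d0, d1, rfl⟩ := h
  set q := X * σ₀ + (C T - X) * σ₁ with hq
  have hdeg : ((X + C c * C T) * q).degree = 1 + q.degree := by
    rw [degree_mul, degree_linL]
  refine ⟨C (1+c) * (X^2 * σ₀) + C c * ((C T - X)^2 * σ₁),
          C c * σ₀ + C (1+c) * σ₁, ?_, ?_, ?_, ?_, ?_⟩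
  · exact (isSumSq_C_mul_sq_mul (by linarith) _ s0).add (isSumSq_C_mul_sq_mul hc _ s1)
  · exact (isSumSq_C_mul hc s0).add (isSumSq_C_mul (by linarith) s1)
  · rw [hdeg]
    refine le_trans (degree_add_le _ _) (max_le ?_ ?_)
    · refine le_trans (degree_C_mul_mul_le' _ degree_X_sq _) ?_
      calc σ₀.degree + 2 = (σ₀.degree + 1) + 1 := by rw [add_assoc]; rfl
      _ ≤ q.degree + 1 := add_le_add_left d0 _
      _ = 1 + q.degree := add_comm _ _
    · refine le_trans (degree_C_mul_mul_le' _ (degree_TX_sq T) _) ?_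
      calc σ₁.degree + 2 = (σ₁.degree + 1) + 1 := by rw [add_assoc]; rfl
      _ ≤ q.degree + 1 := add_le_add_left d1 _
      _ = 1 + q.degree := add_comm _ _
  · rw [hdeg]
    have h1 : (C c * σ₀ + C (1+c) * σ₁).degree ≤ max σ₀.degree σ₁.degree :=
      le_trans (degree_add_le _ _) (max_le
        (le_trans (degree_C_mul_le' _ _) (le_max_left _ _))
        (le_trans (degree_C_mul_le' _ _) (le_max_right _ _)))
    refine le_trans (add_le_add_left h1 2) ?_
    rcases le_total σ₀.degree σ₁.degree with hle | hle
    · rw [max_eq_right hle]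
      calc σ₁.degree + 2 = (σ₁.degree + 1) + 1 := by rw [add_assoc]; rfl
      _ ≤ q.degree + 1 := add_le_add_left d1 _
      _ = 1 + q.degree := add_comm _ _
    · rw [max_eq_left hle]
      calc σ₀.degree + 2 = (σ₀.degree + 1) + 1 := by rw [add_assoc]; rfl
      _ ≤ q.degree + 1 := add_le_add_left d0 _
      _ = 1 + q.degree := add_comm _ _
  · rw [hq, map_add, C_1]; ring

lemma shiftR_odd {T d : ℝ} (hd : 0 ≤ d) {q : ℝ[X]} (h : GoodE T q) :
    GoodO T ((C d * C T + (C T - X)) * q) := by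
  obtain ⟨σ₀, σ₁, s0, s1, d0, d1, rfl⟩ := h
  set q := σ₀ + X * (C T - X) * σ₁ with hq
  have hdeg : ((C d * C T + (C T - X)) * q).degree = 1 + q.degree := by
    rw [degree_mul, degree_linR]
  refine ⟨C d * σ₀ + C (1+d) * ((C T - X)^2 * σ₁),
          C (1+d) * σ₀ + C d * (X^2 * σ₁), ?_, ?_, ?_, ?_, ?_⟩
  · exact (isSumSq_C_mul hd s0).add (isSumSq_C_mul_sq_mul (by linarith) _ s1)
  · exact (isSumSq_C_mul (by linarith) s0).add (isSumSq_C_mul_sq_mul hd _ s1)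
  · rw [hdeg]
    have h1 : (C d * σ₀ + C (1+d) * ((C T - X)^2 * σ₁)).degree ≤ q.degree := by
      refine le_trans (degree_add_le _ _) (max_le ?_ ?_)
      · exact le_trans (degree_C_mul_le' _ _) d0
      · exact le_trans (degree_C_mul_mul_le' _ (degree_TX_sq T) _) d1
    calc _ ≤ q.degree + 1 := add_le_add_left h1 _
    _ = 1 + q.degree := add_comm _ _
  · rw [hdeg]
    have h1 : (C (1+d) * σ₀ + C d * (X^2 * σ₁)).degree ≤ q.degree := by
      refine le_trans (degree_add_le _ _) (max_le ?_ ?_)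
      · exact le_trans (degree_C_mul_le' _ _) d0
      · exact le_trans (degree_C_mul_mul_le' _ degree_X_sq _) d1
    calc _ ≤ q.degree + 1 := add_le_add_left h1 _
    _ = 1 + q.degree := add_comm _ _
  · rw [hq, map_add, C_1]; ring

lemma shiftR_even {T d : ℝ} (hd : 0 ≤ d) {q : ℝ[X]} (h : GoodO T q) :
    GoodE T ((C d * C T + (C T - X)) * q) := by
  obtain ⟨σ₀, σ₁, s0, s1, d0, d1, rfl⟩ := h
  set q := X * σ₀ + (C T - X) * σ₁ with hq
  have hdeg : ((C d * C T + (C T - X)) * q).degree = 1 + q.degree := by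
    rw [degree_mul, degree_linR]
  refine ⟨C d * (X^2 * σ₀) + C (1+d) * ((C T - X)^2 * σ₁),
          C (1+d) * σ₀ + C d * σ₁, ?_, ?_, ?_, ?_, ?_⟩
  · exact (isSumSq_C_mul_sq_mul hd _ s0).add (isSumSq_C_mul_sq_mul (by linarith) _ s1)
  · exact (isSumSq_C_mul (by linarith) s0).add (isSumSq_C_mul hd s1)
  · rw [hdeg]
    refine le_trans (degree_add_le _ _) (max_le ?_ ?_)
    · refine le_trans (degree_C_mul_mul_le' _ degree_X_sq _) ?_
      calc σ₀.degree + 2 = (σ₀.degree + 1) + 1 := by rw [add_assoc]; rfl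
      _ ≤ q.degree + 1 := add_le_add_left d0 _
      _ = 1 + q.degree := add_comm _ _
    · refine le_trans (degree_C_mul_mul_le' _ (degree_TX_sq T) _) ?_
      calc σ₁.degree + 2 = (σ₁.degree + 1) + 1 := by rw [add_assoc]; rfl
      _ ≤ q.degree + 1 := add_le_add_left d1 _
      _ = 1 + q.degree := add_comm _ _
  · rw [hdeg]
    have h1 : (C (1+d) * σ₀ + C d * σ₁).degree ≤ max σ₀.degree σ₁.degree :=
      le_trans (degree_add_le _ _) (max_le
        (le_trans (degree_C_mul_le' _ _) (le_max_left _ _))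
        (le_trans (degree_C_mul_le' _ _) (le_max_right _ _)))
    refine le_trans (add_le_add_left h1 2) ?_
    rcases le_total σ₀.degree σ₁.degree with hle | hle
    · rw [max_eq_right hle]
      calc σ₁.degree + 2 = (σ₁.degree + 1) + 1 := by rw [add_assoc]; rfl
      _ ≤ q.degree + 1 := add_le_add_left d1 _
      _ = 1 + q.degree := add_comm _ _
    · rw [max_eq_left hle]
      calc σ₀.degree + 2 = (σ₀.degree + 1) + 1 := by rw [add_assoc]; rfl
      _ ≤ q.degree + 1 := add_le_add_left d0 _
      _ = 1 + q.degree := add_comm _ _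
  · rw [hq, map_add, C_1]; ring

lemma mulSq_even {T : ℝ} {g q : ℝ[X]} (hg : IsSumSq g) (hdg : g.degree = 2) (h : GoodE T q) :
    GoodE T (g * q) := by
  obtain ⟨σ₀, σ₁, s0, s1, d0, d1, rfl⟩ := h
  set q := σ₀ + X * (C T - X) * σ₁ with hq
  refine ⟨g * σ₀, g * σ₁, hg.mul' s0, hg.mul' s1, ?_, ?_, ?_⟩
  · rw [degree_mul, degree_mul, hdg]
    exact add_le_add_right d0 _
  · rw [degree_mul, degree_mul, hdg, add_assoc]
    exact add_le_add_right d1 _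
  · rw [hq]; ring

lemma mulSq_odd {T : ℝ} {g q : ℝ[X]} (hg : IsSumSq g) (hdg : g.degree = 2) (h : GoodO T q) :
    GoodO T (g * q) := by
  obtain ⟨σ₀, σ₁, s0, s1, d0, d1, rfl⟩ := h
  set q := X * σ₀ + (C T - X) * σ₁ with hq
  refine ⟨g * σ₀, g * σ₁, hg.mul' s0, hg.mul' s1, ?_, ?_, ?_⟩
  · rw [degree_mul, degree_mul, hdg, add_assoc]
    exact add_le_add_right d0 _
  · rw [degree_mul, degree_mul, hdg, add_assoc]
    exact add_le_add_right d1 _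
  · rw [hq]; ring

lemma eval_nonneg_of_isSumSq {σ : ℝ[X]} (h : IsSumSq σ) (t : ℝ) : 0 ≤ σ.eval t := by
  induction h with
  | zero => simp
  | sq_add a hs ih => simp only [eval_add, eval_mul]; nlinarith [mul_self_nonneg (a.eval t)]

lemma nonneg_on_Icc_of_Ioo {q : ℝ[X]} {a b : ℝ} (hab : a < b)
    (h : ∀ t ∈ Set.Ioo a b, 0 ≤ q.eval t) : ∀ t ∈ Set.Icc a b, 0 ≤ q.eval t := by
  have hcl : IsClosed {t : ℝ | 0 ≤ q.eval t} :=
    isClosed_le continuous_const q.continuous_aeval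
  intro t ht
  have hsub : Set.Icc a b ⊆ {t : ℝ | 0 ≤ q.eval t} := by
    rw [← closure_Ioo hab.ne]
    exact hcl.closure_subset_iff.mpr h
  exact hsub ht

lemma quad_factor {p : ℝ[X]} (hp0 : p ≠ 0) (h1 : p.natDegree ≠ 0)
    (hroot : ¬∃ r : ℝ, p.IsRoot r) :
    ∃ Q h : ℝ[X], IsSumSq Q ∧ Q.degree = 2 ∧ (∀ t : ℝ, 0 < Q.eval t) ∧ p = Q * h := by
  set f := algebraMap ℝ ℂ
  have hinj : Function.Injective f := f.injective
  set pm := p.map f with hpm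
  have hdm : 0 < pm.degree := by
    rw [hpm, degree_map_eq_of_injective hinj]
    exact natDegree_pos_iff_degree_pos.mp (Nat.pos_of_ne_zero h1)
  obtain ⟨z, hz⟩ := Complex.exists_root hdm
  have him : z.im ≠ 0 := by
    intro h0
    refine hroot ⟨z.re, ?_⟩
    have hzz : z = f z.re := by
      apply Complex.ext <;> simp [f, h0]
    have hz0 : pm.eval (f z.re) = 0 := by rw [← hzz]; exact hz
    have heq : pm.eval (f z.re) = f (p.eval z.re) := by
      rw [hpm, eval_map, eval₂_hom]
    rw [heq] at hz0
    exact hinj (by simpa using hz0)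
  have hzc : pm.IsRoot ((starRingEnd ℂ) z) := by
    have hmapc : pm.map (starRingEnd ℂ) = pm := by
      rw [hpm, map_map]
      congr 1
      ext x
      simp [f, Complex.conj_ofReal]
    have heq : (pm.map (starRingEnd ℂ)).eval ((starRingEnd ℂ) z) = (starRingEnd ℂ) (pm.eval z) := by
      rw [eval_map, eval₂_hom]
    have : pm.eval ((starRingEnd ℂ) z) = (starRingEnd ℂ) (pm.eval z) := by
      rw [← heq, hmapc]
    rw [IsRoot, this, hz.eq_zero, map_zero]
  set Q : ℝ[X] := (X - C z.re)^2 + C (z.im^2) with hQ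
  have hQdeg : Q.degree = 2 := by
    rw [hQ]
    have h2 : ((X - C z.re : ℝ[X])^2).degree = 2 := by
      rw [degree_pow, degree_X_sub_C]; rfl
    rw [degree_add_eq_left_of_degree_lt]
    · exact h2
    · rw [h2]; exact lt_of_le_of_lt degree_C_le (by decide)
  have hQmonic : Q.Monic := by
    have : ((X - C z.re : ℝ[X])^2).Monic := (monic_X_sub_C _).pow 2
    refine this.add_of_left ?_
    rw [degree_pow, degree_X_sub_C]
    exact lt_of_le_of_lt degree_C_le (by decide)
  have hQsos : IsSumSq Q := by
    have : Q = (X - C z.re) * (X - C z.re) + (C z.im * C z.im + 0) := by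
      rw [hQ, ← C_mul]; ring
    rw [this]
    exact IsSumSq.sq_add _ (IsSumSq.sq_add _ IsSumSq.zero)
  have hQpos : ∀ t : ℝ, 0 < Q.eval t := by
    intro t
    rw [hQ]
    simp only [eval_add, eval_pow, eval_sub, eval_X, eval_C]
    positivity
  have hQmap : Q.map f = (X - C z) * (X - C ((starRingEnd ℂ) z)) := by
    have hI : (C Complex.I : ℂ[X])^2 = -1 := by
      rw [← C_pow, Complex.I_sq, map_neg, C_1]
    have hCz : (C z : ℂ[X]) = C (z.re:ℂ) + C (z.im:ℂ) * C Complex.I := by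
      rw [← map_mul, ← map_add]
      congr 1
      exact (Complex.re_add_im z).symm
    have hCzc : (C ((starRingEnd ℂ) z) : ℂ[X]) = C (z.re:ℂ) - C (z.im:ℂ) * C Complex.I := by
      rw [← map_mul, ← map_sub]
      congr 1
      rw [show ((starRingEnd ℂ) z) = (starRingEnd ℂ) ((z.re:ℂ) + (z.im:ℂ) * Complex.I) by
        rw [Complex.re_add_im]]
      rw [map_add, map_mul, Complex.conj_ofReal, Complex.conj_ofReal, Complex.conj_I]
      ring
    have hf1 : f z.re = ((z.re : ℝ) : ℂ) := rfl
    have hf2 : f (z.im^2) = ((z.im : ℂ))^2 := by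
      rw [show f (z.im^2) = ((z.im^2 : ℝ) : ℂ) from rfl]
      push_cast
      ring
    rw [hQ]
    simp only [Polynomial.map_add, Polynomial.map_pow, Polynomial.map_sub, map_X, map_C]
    rw [hf1, hf2, C_pow, hCz, hCzc]
    linear_combination (C ((z.im:ℂ)))^2 * hI
  have hne : z ≠ (starRingEnd ℂ) z := by
    intro h
    rw [eq_comm, Complex.conj_eq_iff_im] at h
    exact him h
  have hcop : IsCoprime (X - C z) (X - C ((starRingEnd ℂ) z)) :=
    isCoprime_X_sub_C_of_isUnit_sub (sub_ne_zero.mpr hne).isUnit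
  have hdvd : Q.map f ∣ pm := by
    rw [hQmap]
    exact hcop.mul_dvd (dvd_iff_isRoot.mpr hz) (dvd_iff_isRoot.mpr hzc)
  have hQp : Q ∣ p := by
    rwa [hpm, map_dvd_map f hinj hQmonic] at hdvd
  obtain ⟨h, hh⟩ := hQp
  exact ⟨Q, h, hQsos, hQdeg, hQpos, hh⟩

lemma const_case {T : ℝ} (hT : 0 < T) (p : ℝ[X]) (h0 : p.natDegree = 0) (hp0 : p ≠ 0)
    (hpos : ∀ t ∈ Set.Icc (0:ℝ) T, 0 ≤ p.eval t) :
    (Even p.natDegree ∧ GoodE T p) ∨ (¬ Even p.natDegree ∧ GoodO T p) := by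
  left
  refine ⟨by simp [h0], ?_⟩
  obtain ⟨c, rfl⟩ := natDegree_eq_zero.mp h0
  have hc : 0 ≤ c := by
    have := hpos 0 ⟨le_refl 0, hT.le⟩
    simpa using this
  refine ⟨C c, 0, isSumSq_C_of_nonneg hc, IsSumSq.zero, le_rfl, ?_, by ring⟩
  rw [degree_zero]
  simp

lemma markov_main {T : ℝ} (hT : 0 < T) :
    ∀ n (p : ℝ[X]), p.natDegree ≤ n → p ≠ 0 →
      (∀ t ∈ Set.Icc (0:ℝ) T, 0 ≤ p.eval t) →
      (Even p.natDegree ∧ GoodE T p) ∨ (¬ Even p.natDegree ∧ GoodO T p) := by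
  intro n
  induction n with
  | zero =>
    intro p hdeg hp0 hpos
    exact const_case hT p (Nat.le_zero.mp hdeg) hp0 hpos
  | succ n ih =>
    intro p hdeg hp0 hpos
    by_cases hc0 : p.natDegree = 0
    · exact const_case hT p hc0 hp0 hpos
    by_cases hroot : ∃ r : ℝ, p.IsRoot r
    · obtain ⟨r, hr⟩ := hroot
      obtain ⟨q, hpq⟩ := dvd_iff_isRoot.mpr hr
      have hq0 : q ≠ 0 := by rintro rfl; rw [mul_zero] at hpq; exact hp0 hpq
      have hXr : (X - C r : ℝ[X]) ≠ 0 := X_sub_C_ne_zero r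
      have hnd : p.natDegree = 1 + q.natDegree := by
        rw [hpq, natDegree_mul hXr hq0, natDegree_X_sub_C]
      rcases le_or_gt r 0 with hr0 | hrpos
      · -- root at r ≤ 0
        have hqpos : ∀ t ∈ Set.Icc (0:ℝ) T, 0 ≤ q.eval t := by
          apply nonneg_on_Icc_of_Ioo hT
          intro t ht
          have h1 := hpos t (Set.Ioo_subset_Icc_self ht)
          rw [hpq, eval_mul, eval_sub, eval_X, eval_C] at h1
          nlinarith [ht.1]
        set c := (-r)/T with hcdef
        have hc : 0 ≤ c := div_nonneg (by linarith) hT.le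
        have hfac : p = (X + C c * C T) * q := by
          rw [hpq]
          congr 1
          rw [← C_mul, hcdef, div_mul_cancel₀ _ hT.ne', map_neg]
          ring
        rcases ih q (by omega) hq0 hqpos with ⟨hev, hE⟩ | ⟨hod, hO⟩
        · right
          refine ⟨?_, ?_⟩
          · rw [hnd]; simp [Nat.even_add, hev]
          · rw [hfac]; exact shiftL_odd hc hE
        · left
          refine ⟨?_, ?_⟩
          · rw [hnd]; simp [Nat.even_add, hod]
          · rw [hfac]; exact shiftL_even hc hO
      rcases lt_or_ge r T with hrT | hTr
      · -- double root in (0,T)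
        have hqr_le : q.eval r ≤ 0 := by
          have h2 : ∀ t ∈ Set.Icc (0:ℝ) r, 0 ≤ (-q).eval t := by
            apply nonneg_on_Icc_of_Ioo hrpos
            intro t ht
            have h1 := hpos t ⟨ht.1.le, le_trans ht.2.le hrT.le⟩
            rw [hpq, eval_mul, eval_sub, eval_X, eval_C] at h1
            rw [eval_neg]
            nlinarith [ht.2]
          have := h2 r ⟨hrpos.le, le_refl r⟩
          rw [eval_neg] at this
          linarith
        have hqr_ge : 0 ≤ q.eval r := by
          have h2 : ∀ t ∈ Set.Icc r T, 0 ≤ q.eval t := by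
            apply nonneg_on_Icc_of_Ioo hrT
            intro t ht
            have h1 := hpos t ⟨le_trans hrpos.le ht.1.le, ht.2.le⟩
            rw [hpq, eval_mul, eval_sub, eval_X, eval_C] at h1
            nlinarith [ht.1]
          exact h2 r ⟨le_refl r, hrT.le⟩
        have hqr : q.IsRoot r := le_antisymm hqr_le hqr_ge
        obtain ⟨q₂, hq₂⟩ := dvd_iff_isRoot.mpr hqr
        have hfac : p = (X - C r)^2 * q₂ := by rw [hpq, hq₂]; ring
        have hq₂0 : q₂ ≠ 0 := by rintro rfl; rw [mul_zero] at hfac; exact hp0 hfac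
        have hnd2 : p.natDegree = 2 + q₂.natDegree := by
          rw [hfac, natDegree_mul (pow_ne_zero 2 hXr) hq₂0, natDegree_pow, natDegree_X_sub_C]
        have hdeg2 : ((X - C r : ℝ[X])^2).degree = 2 := by
          rw [degree_pow, degree_X_sub_C]; rfl
        have hsos2 : IsSumSq ((X - C r : ℝ[X])^2) := by
          rw [pow_two]; exact sq_isSumSq _
        have key : ∀ t, 0 ≤ p.eval t → t ≠ r → 0 ≤ q₂.eval t := by
          intro t h1 h2
          rw [hfac, eval_mul, eval_pow, eval_sub, eval_X, eval_C] at h1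
          have h3 : (0:ℝ) < (t - r)^2 := by
            have : t - r ≠ 0 := sub_ne_zero.mpr h2
            positivity
          nlinarith
        have hq₂pos : ∀ t ∈ Set.Icc (0:ℝ) T, 0 ≤ q₂.eval t := by
          intro t ht
          rcases le_total t r with h | h
          · exact nonneg_on_Icc_of_Ioo hrpos
              (fun s hs => key s (hpos s ⟨hs.1.le, le_trans hs.2.le hrT.le⟩) (ne_of_lt hs.2))
              t ⟨ht.1, h⟩
          · exact nonneg_on_Icc_of_Ioo hrT
              (fun s hs => key s (hpos s ⟨le_trans hrpos.le hs.1.le, hs.2.le⟩) (ne_of_gt hs.1))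
              t ⟨h, ht.2⟩
        rcases ih q₂ (by omega) hq₂0 hq₂pos with ⟨hev, hE⟩ | ⟨hod, hO⟩
        · left
          refine ⟨?_, ?_⟩
          · rw [hnd2]; simp [Nat.even_add, hev]
          · rw [hfac]; exact mulSq_even hsos2 hdeg2 hE
        · right
          refine ⟨?_, ?_⟩
          · rw [hnd2]; simp [Nat.even_add, hod]
          · rw [hfac]; exact mulSq_odd hsos2 hdeg2 hO
      · -- root at r ≥ T
        have hqneg : ∀ t ∈ Set.Icc (0:ℝ) T, 0 ≤ (-q).eval t := by
          apply nonneg_on_Icc_of_Ioo hT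
          intro t ht
          have h1 := hpos t (Set.Ioo_subset_Icc_self ht)
          rw [hpq, eval_mul, eval_sub, eval_X, eval_C] at h1
          rw [eval_neg]
          nlinarith [ht.2]
        set d := (r - T)/T with hddef
        have hd : 0 ≤ d := div_nonneg (by linarith) hT.le
        have hfac : p = (C d * C T + (C T - X)) * (-q) := by
          rw [hpq, ← C_mul, hddef, div_mul_cancel₀ _ hT.ne', map_sub]
          ring
        have hnq : (-q) ≠ 0 := neg_ne_zero.mpr hq0
        have hndq : (-q).natDegree = q.natDegree := natDegree_neg q
        rcases ih (-q) (by rw [hndq]; omega) hnq hqneg with ⟨hev, hE⟩ | ⟨hod, hO⟩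
        · right
          refine ⟨?_, ?_⟩
          · rw [hndq] at hev
            rw [hnd]; simp [Nat.even_add, hev]
          · rw [hfac]; exact shiftR_odd hd hE
        · left
          refine ⟨?_, ?_⟩
          · rw [hndq] at hod
            rw [hnd]; simp [Nat.even_add, hod]
          · rw [hfac]; exact shiftR_even hd hO
    · -- no real root
      obtain ⟨Q, h, hQsos, hQdeg, hQpos, hfac⟩ := quad_factor hp0 hc0 hroot
      have hQ0 : Q ≠ 0 := by
        intro e
        rw [e, degree_zero] at hQdeg
        exact absurd hQdeg (by decide)
      have hh0 : h ≠ 0 := by rintro rfl; rw [mul_zero] at hfac; exact hp0 hfac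
      have hqd2 : Q.natDegree = 2 := natDegree_eq_of_degree_eq_some hQdeg
      have hnd : p.natDegree = 2 + h.natDegree := by
        rw [hfac, natDegree_mul hQ0 hh0, hqd2]
      have hhpos : ∀ t ∈ Set.Icc (0:ℝ) T, 0 ≤ h.eval t := by
        intro t ht
        have h1 := hpos t ht
        rw [hfac, eval_mul] at h1
        nlinarith [hQpos t]
      rcases ih h (by omega) hh0 hhpos with ⟨hev, hE⟩ | ⟨hod, hO⟩
      · left
        refine ⟨?_, ?_⟩
        · rw [hnd]; simp [Nat.even_add, hev]
        · rw [hfac]; exact mulSq_even hQsos hQdeg hE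
      · right
        refine ⟨?_, ?_⟩
        · rw [hnd]; simp [Nat.even_add, hod]
        · rw [hfac]; exact mulSq_odd hQsos hQdeg hO

lemma coe_bound_2 {a b : ℕ} (h : (a : WithBot ℕ) + 2 ≤ (b : WithBot ℕ)) : a + 2 ≤ b := by
  have : ((a + 2 : ℕ) : WithBot ℕ) ≤ (b : WithBot ℕ) := by push_cast; exact_mod_cast h
  exact_mod_cast this

lemma coe_bound_1 {a b : ℕ} (h : (a : WithBot ℕ) + 1 ≤ (b : WithBot ℕ)) : a + 1 ≤ b := by
  have : ((a + 1 : ℕ) : WithBot ℕ) ≤ (b : WithBot ℕ) := by push_cast; exact_mod_cast h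
  exact_mod_cast this

/-- Markov–Lukács: a univariate polynomial p ∈ ℝ[t] is nonnegative on
[0, T] (T > 0) if and only if p = σ₀ + t(T − t)σ₁ when deg p is even, or
p = tσ₀ + (T − t)σ₁ when deg p is odd, with σ₀, σ₁ sums of squares of appropriate
degrees. -/
theorem markov_lukacs (T : ℝ) (hT : 0 < T) (p : ℝ[X]) :
    (∀ t ∈ Set.Icc (0 : ℝ) T, 0 ≤ p.eval t) ↔
      ((Even p.natDegree ∧
          ∃ σ₀ σ₁ : ℝ[X], IsSumSq σ₀ ∧ IsSumSq σ₁ ∧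
            σ₀.natDegree ≤ p.natDegree ∧ σ₁.natDegree + 2 ≤ max p.natDegree 2 ∧
            p = σ₀ + X * (C T - X) * σ₁) ∨
        (¬ Even p.natDegree ∧
          ∃ σ₀ σ₁ : ℝ[X], IsSumSq σ₀ ∧ IsSumSq σ₁ ∧
            σ₀.natDegree + 1 ≤ p.natDegree ∧ σ₁.natDegree + 1 ≤ p.natDegree ∧
            p = X * σ₀ + (C T - X) * σ₁)) := by
  constructor
  · intro hpos
    by_cases hp0 : p = 0
    · subst hp0
      left
      exact ⟨by simp, 0, 0, IsSumSq.zero, IsSumSq.zero, by simp, by simp, by ring⟩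
    rcases markov_main hT p.natDegree p le_rfl hp0 hpos with ⟨hev, hE⟩ | ⟨hod, hO⟩
    · left
      obtain ⟨σ₀, σ₁, s0, s1, d0, d1, heq⟩ := hE
      refine ⟨hev, σ₀, σ₁, s0, s1, ?_, ?_, heq⟩
      · by_cases h : σ₀ = 0
        · simp [h]
        · exact natDegree_le_natDegree d0
      · by_cases h : σ₁ = 0
        · simp [h]
        · refine le_trans ?_ (le_max_left _ _)
          rw [degree_eq_natDegree h, degree_eq_natDegree hp0] at d1
          exact coe_bound_2 d1
    · right
      obtain ⟨σ₀, σ₁, s0, s1, d0, d1, heq⟩ := hO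
      have hpn : 1 ≤ p.natDegree := by
        by_contra h
        exact hod (by simp [Nat.lt_one_iff.mp (not_le.mp h)])
      refine ⟨hod, σ₀, σ₁, s0, s1, ?_, ?_, heq⟩
      · by_cases h : σ₀ = 0
        · simp [h]; omega
        · rw [degree_eq_natDegree h, degree_eq_natDegree hp0] at d0
          exact coe_bound_1 d0
      · by_cases h : σ₁ = 0
        · simp [h]; omega
        · rw [degree_eq_natDegree h, degree_eq_natDegree hp0] at d1
          exact coe_bound_1 d1
  · rintro (⟨_, σ₀, σ₁, s0, s1, _, _, rfl⟩ | ⟨_, σ₀, σ₁, s0, s1, _, _, rfl⟩) <;>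
      intro t ht <;>
      simp only [eval_add, eval_mul, eval_sub, eval_X, eval_C]
    · have h0 := eval_nonneg_of_isSumSq s0 t
      have h1 := eval_nonneg_of_isSumSq s1 t
      have h2 := mul_nonneg (mul_nonneg ht.1 (sub_nonneg.mpr ht.2)) h1
      linarith
    · have h0 := eval_nonneg_of_isSumSq s0 t
      have h1 := eval_nonneg_of_isSumSq s1 t
      have h2 := mul_nonneg ht.1 h0
      have h3 := mul_nonneg (sub_nonneg.mpr ht.2) h1
      linarith
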